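/- Let f(X,Y) be a holomorphic quadratic form on ℂ^N × ℂ^N with det f''_{XY} ≠ 0, and let g(Y) be a holomorphic quadratic form on ℂ^N such that the quadratic form Y ↦ f(0,Y) + g(Y) is non-degenerate. Define h(X) as the critical value of Y ↦ f(X,Y) + g(Y) (attained at the unique critical point, which is non-degenerate). Then the quadratic form X ↦ -f(X,0) + h(X) is non-degenerate, and for every Y ∈ ℂ^N, g(Y) equals the critical value of X ↦ -f(X,Y) + h(X). -/

import Mathlib

open Matrix

/-- Proposition on inversion of critical values of quadratic forms.
`f (X, Y) = X ⬝ P X + X ⬝ M Y + Y ⬝ Q Y` is a general holomorphic quadratic form on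
`ℂ^N × ℂ^N` with `f''_{XY} = M`, and `g Y = Y ⬝ G Y`. -/
theorem stmt_12 (N : ℕ) (P Q G M : Matrix (Fin N) (Fin N) ℂ)
    (hP : Pᵀ = P) (hQ : Qᵀ = Q) (hG : Gᵀ = G)
    (hM : M.det ≠ 0)
    (f : (Fin N → ℂ) → (Fin N → ℂ) → ℂ)
    (hf : ∀ X Y, f X Y = X ⬝ᵥ P.mulVec X + X ⬝ᵥ M.mulVec Y + Y ⬝ᵥ Q.mulVec Y)
    (g : (Fin N → ℂ) → ℂ) (hg : ∀ Y, g Y = Y ⬝ᵥ G.mulVec Y)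
    -- non-degeneracy of Y ↦ f(0,Y) + g(Y), whose Hessian is 2(Q+G)
    (hQG : IsUnit (Q + G)) :
    ∃ (h : (Fin N → ℂ) → ℂ) (H : Matrix (Fin N) (Fin N) ℂ),
      -- h is a holomorphic quadratic form with (half-)Hessian matrix H
      Hᵀ = H ∧ (∀ X, h X = X ⬝ᵥ H.mulVec X) ∧
      -- h X is the critical value of Y ↦ f X Y + g Y, attained at the unique
      -- critical point (where the Y-gradient Mᵀ X + 2 (Q + G) Y vanishes)
      (∀ X, ∃! Y : Fin N → ℂ,
        Mᵀ.mulVec X + (2 : ℂ) • (Q + G).mulVec Y = 0 ∧ h X = f X Y + g Y) ∧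
      -- the quadratic form X ↦ -f(X,0) + h(X), with (half-)Hessian H - P,
      -- is non-degenerate
      IsUnit (H - P) ∧
      -- g Y is the critical value of X ↦ -f X Y + h X, attained at the unique
      -- critical point (where the X-gradient -(2 P X + M Y) + 2 H X vanishes)
      (∀ Y, ∃! X : Fin N → ℂ,
        (2 : ℂ) • (H - P).mulVec X - M.mulVec Y = 0 ∧ g Y = -f X Y + h X) := by
  classical
  set A := Q + G with hAdef
  have hAd : IsUnit A.det := (Matrix.isUnit_iff_isUnit_det A).mp hQG
  have hAA : A * A⁻¹ = 1 := Matrix.mul_nonsing_inv A hAd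
  have hA'A : A⁻¹ * A = 1 := Matrix.nonsing_inv_mul A hAd
  have hAT : Aᵀ = A := by rw [hAdef, Matrix.transpose_add, hQ, hG]
  have hAiT : (A⁻¹)ᵀ = A⁻¹ := by rw [Matrix.transpose_nonsing_inv, hAT]
  have hAid : IsUnit A⁻¹.det :=
    IsUnit.of_mul_eq_one _ (Matrix.det_nonsing_inv_mul_det A hAd)
  have hMd : IsUnit M.det := isUnit_iff_ne_zero.mpr hM
  have hMTd : IsUnit Mᵀ.det := by rwa [Matrix.det_transpose, isUnit_iff_ne_zero]
  have hMi : M⁻¹ * M = 1 := Matrix.nonsing_inv_mul M hMd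
  have hMT : Mᵀ * (Mᵀ)⁻¹ = 1 := Matrix.mul_nonsing_inv Mᵀ hMTd
  have hMTi : (Mᵀ)⁻¹ * Mᵀ = 1 := Matrix.nonsing_inv_mul Mᵀ hMTd
  -- cancellation helper
  have cancel : ∀ (C D : Matrix (Fin N) (Fin N) ℂ), C * D = 1 →
      ∀ v : Fin N → ℂ, C *ᵥ (D *ᵥ v) = v := by
    intro C D hCD v
    rw [Matrix.mulVec_mulVec, hCD, Matrix.one_mulVec]
  -- dot product transpose helper
  have dotc : ∀ (C : Matrix (Fin N) (Fin N) ℂ) (x y : Fin N → ℂ),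
      x ⬝ᵥ C *ᵥ y = Cᵀ *ᵥ x ⬝ᵥ y := by
    intro C x y
    rw [Matrix.dotProduct_mulVec, Matrix.mulVec_transpose]
  set B := M * A⁻¹ * Mᵀ with hBdef
  have hBT : Bᵀ = B := by
    rw [hBdef, Matrix.transpose_mul, Matrix.transpose_mul, hAiT,
      Matrix.transpose_transpose, mul_assoc]
  set H := P - (4⁻¹ : ℂ) • B with hHdef
  have hHP : H - P = (-(4⁻¹ : ℂ)) • B := by
    rw [hHdef]; module
  have hX0H : ∀ X : Fin N → ℂ,
      X ⬝ᵥ H *ᵥ X = X ⬝ᵥ P *ᵥ X - 4⁻¹ * (X ⬝ᵥ B *ᵥ X) := by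
    intro X
    rw [hHdef, Matrix.sub_mulVec, dotProduct_sub, Matrix.smul_mulVec,
      dotProduct_smul, smul_eq_mul]
  have hYA : ∀ Y : Fin N → ℂ,
      Y ⬝ᵥ Q *ᵥ Y + Y ⬝ᵥ G *ᵥ Y = Y ⬝ᵥ A *ᵥ Y := by
    intro Y
    rw [hAdef, Matrix.add_mulVec, dotProduct_add]
  refine ⟨fun X => X ⬝ᵥ H *ᵥ X, H, ?_, fun X => rfl, ?_, ?_, ?_⟩
  · rw [hHdef, Matrix.transpose_sub, Matrix.transpose_smul, hBT, hP]
  · -- existence and uniqueness of critical point in Y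
    intro X
    set Y0 : Fin N → ℂ := (-(2⁻¹ : ℂ)) • (A⁻¹ * Mᵀ) *ᵥ X with hY0def
    have hAY0 : A *ᵥ Y0 = (-(2⁻¹ : ℂ)) • Mᵀ *ᵥ X := by
      rw [hY0def, Matrix.mulVec_smul, Matrix.mulVec_mulVec, ← mul_assoc, hAA, one_mul]
    have e1 : X ⬝ᵥ M *ᵥ Y0 = -(2⁻¹ : ℂ) * (X ⬝ᵥ B *ᵥ X) := by
      rw [hY0def, Matrix.mulVec_smul, Matrix.mulVec_mulVec, ← mul_assoc, ← hBdef,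
        dotProduct_smul, smul_eq_mul]
    have e2 : Y0 ⬝ᵥ A *ᵥ Y0 = -(2⁻¹ : ℂ) * (X ⬝ᵥ M *ᵥ Y0) := by
      rw [hAY0, dotProduct_smul, smul_eq_mul, dotc M X Y0, dotProduct_comm]
    refine ⟨Y0, ⟨?_, ?_⟩, ?_⟩
    · rw [hAY0]; module
    · show X ⬝ᵥ H *ᵥ X = f X Y0 + g Y0
      rw [hf, hg, hX0H]
      linear_combination (-(2⁻¹:ℂ)) * e1 - e2 - hYA Y0
    · intro Y ⟨hgrad, _⟩
      have h1 : A *ᵥ Y = (-(2⁻¹ : ℂ)) • Mᵀ *ᵥ X := by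
        have h0 : (2 : ℂ) • A *ᵥ Y = -(Mᵀ *ᵥ X) :=
          eq_neg_of_add_eq_zero_right hgrad
        have := congrArg (fun v => (2⁻¹ : ℂ) • v) h0
        simpa [smul_smul, show (2⁻¹ : ℂ) * 2 = 1 by norm_num] using this
      calc Y = A⁻¹ *ᵥ (A *ᵥ Y) := (cancel A⁻¹ A hA'A Y).symm
        _ = Y0 := by
            rw [h1, hY0def, Matrix.mulVec_smul, Matrix.mulVec_mulVec]
  · -- non-degeneracy of H - P
    rw [hHP, Matrix.isUnit_iff_isUnit_det, Matrix.det_smul, hBdef,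
      Matrix.det_mul, Matrix.det_mul, Matrix.det_transpose]
    exact ((isUnit_iff_ne_zero.mpr (by norm_num : (-(4⁻¹:ℂ)) ≠ 0)).pow _).mul
      ((hMd.mul hAid).mul hMd)
  · -- existence and uniqueness of critical point in X
    intro Y
    set X0 : Fin N → ℂ := (-(2 : ℂ)) • ((Mᵀ)⁻¹ * A) *ᵥ Y with hX0def
    have hMTX0 : Mᵀ *ᵥ X0 = (-(2 : ℂ)) • A *ᵥ Y := by
      rw [hX0def, Matrix.mulVec_smul, Matrix.mulVec_mulVec, ← mul_assoc, hMT, one_mul]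
    have hBX0 : B *ᵥ X0 = (-(2 : ℂ)) • M *ᵥ Y := by
      rw [hBdef, ← Matrix.mulVec_mulVec, hMTX0, Matrix.mulVec_smul,
        Matrix.mulVec_mulVec, mul_assoc, hA'A, mul_one]
    have e3 : X0 ⬝ᵥ M *ᵥ Y = (-(2 : ℂ)) * (Y ⬝ᵥ A *ᵥ Y) := by
      rw [dotc M X0 Y, hMTX0, smul_dotProduct, smul_eq_mul, dotProduct_comm,
        dotc A Y Y, hAT]
    have e4 : X0 ⬝ᵥ B *ᵥ X0 = (-(2 : ℂ)) * (X0 ⬝ᵥ M *ᵥ Y) := by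
      rw [hBX0, dotProduct_smul, smul_eq_mul]
    refine ⟨X0, ⟨?_, ?_⟩, ?_⟩
    · rw [hHP, Matrix.smul_mulVec, hBX0]; module
    · show g Y = -f X0 Y + X0 ⬝ᵥ H *ᵥ X0
      rw [hg, hf, hX0H]
      linear_combination hYA Y + (2⁻¹:ℂ) * e3 + (4⁻¹:ℂ) * e4
    · intro X ⟨hgrad, _⟩
      have h0 : (2 : ℂ) • (H - P) *ᵥ X = M *ᵥ Y := sub_eq_zero.mp hgrad
      rw [hHP, Matrix.smul_mulVec, smul_smul] at h0
      have h1 : B *ᵥ X = (-(2 : ℂ)) • M *ᵥ Y := by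
        rw [← h0, smul_smul]
        norm_num
      have h2 : (A⁻¹ * Mᵀ) *ᵥ X = (-(2 : ℂ)) • Y := by
        have := congrArg (fun v => M⁻¹ *ᵥ v) h1
        simpa [hBdef, ← Matrix.mulVec_mulVec, cancel M⁻¹ M hMi,
          Matrix.mulVec_smul, Matrix.mulVec_neg] using this
      have h3 : Mᵀ *ᵥ X = (-(2 : ℂ)) • A *ᵥ Y := by
        have := congrArg (fun v => A *ᵥ v) h2
        simpa [← Matrix.mulVec_mulVec, cancel A A⁻¹ hAA, Matrix.mulVec_smul,
          Matrix.mulVec_neg] using this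
      calc X = (Mᵀ)⁻¹ *ᵥ (Mᵀ *ᵥ X) := (cancel (Mᵀ)⁻¹ Mᵀ hMTi X).symm
        _ = X0 := by
            rw [h3, hX0def, Matrix.mulVec_smul, Matrix.mulVec_mulVec]
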